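/- Let K be a field of characteristic 0, E = K(a,b,c,d), p ≠ p' odd primes. Define Γ_p^*(a^2) = 2a^{2p}·(ad−bc)^p/(a^p d^p − b^p c^p) extended as twice a field homomorphism on degree-2 monomials, and Γ_{\bar p'}^* the map induced by a ↦ a^{p'}, b ↦ b^{p'}, c ↦ c^{p'}, d ↦ d^{p'}. Then Γ_{\bar p'}^*(Γ_p^*(a^2)) ≠ Γ_p^*(Γ_{\bar p'}^*(a^2)); explicitly, 2a^{2pp'}·(a^{p'}d^{p'}−b^{p'}c^{p'})^p/(a^{pp'}d^{pp'}−b^{pp'}c^{pp'}) ≠ 2a^{2pp'}·((ad−bc)^p/(a^p d^p − b^p c^p))^{p'}. -/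

import Mathlib

section Aux

open Polynomial

lemma aux_coeff1_one_sub_X_pow (K : Type) [Field K] (n : ℕ) :
    (((1 : K[X]) - X) ^ n).coeff 1 = -(n : K) := by
  have h := coeff_derivative (((1 : K[X]) - X) ^ n) 0
  rw [derivative_pow] at h
  simp [coeff_zero_eq_eval_zero] at h
  exact h.symm

lemma aux_coeff1_mul (K : Type) [Field K] (f g : K[X]) :
    (f * g).coeff 1 = f.coeff 0 * g.coeff 1 + f.coeff 1 * g.coeff 0 := by
  rw [coeff_mul, Finset.Nat.antidiagonal_succ]
  simp [Prod.map, Finset.sum_pair, add_comm]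

lemma aux_coeff0_one_sub_X_pow (K : Type) [Field K] (n m : ℕ) (hn : 0 < n) :
    (((1 : K[X]) - X ^ n) ^ m).coeff 0 = 1 := by
  simp [coeff_zero_eq_eval_zero, zero_pow hn.ne']

lemma aux_coeff1_one_sub_X_pow_pow (K : Type) [Field K] (n m : ℕ) (hn : 1 < n) :
    (((1 : K[X]) - X ^ n) ^ m).coeff 1 = 0 := by
  have : ((1 : K[X]) - X ^ n) ^ m = expand K n (((1 : K[X]) - X) ^ m) := by
    simp [map_pow]
  rw [this, coeff_expand (by omega : 0 < n),
    if_neg (fun hd => by have := Nat.le_of_dvd one_pos hd; omega)]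

lemma aux_poly_ne (K : Type) [Field K] [CharZero K] (p p' : ℕ) (hp : 1 < p) (hp' : 1 < p') :
    ((1 : K[X]) - X ^ p') ^ p * ((1 : K[X]) - X ^ p) ^ p' ≠
      ((1 : K[X]) - X) ^ (p * p') * ((1 : K[X]) - X ^ (p * p')) := by
  intro h
  have h1 := congrArg (fun f => coeff f 1) h
  simp only [aux_coeff1_mul] at h1
  have e1 : ((1 : K[X]) - X) ^ (p * p') = ((1 : K[X]) - X ^ 1) ^ (p * p') := by norm_num
  have e2 : ((1 : K[X]) - X ^ (p * p')) = ((1 : K[X]) - X ^ (p * p')) ^ 1 := by ring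
  have e3 : (((1 : K[X]) - X ^ 1) ^ (p * p')).coeff 1 = -((p * p' : ℕ) : K) := by
    rw [pow_one, aux_coeff1_one_sub_X_pow]
  rw [aux_coeff0_one_sub_X_pow K p' p (by omega), aux_coeff0_one_sub_X_pow K p p' (by omega),
    aux_coeff1_one_sub_X_pow_pow K p' p hp', aux_coeff1_one_sub_X_pow_pow K p p' hp,
    e1, e2, aux_coeff0_one_sub_X_pow K 1 (p * p') one_pos,
    aux_coeff1_one_sub_X_pow_pow K (p * p') 1 (by nlinarith), e3,
    aux_coeff0_one_sub_X_pow K (p * p') 1 (by positivity)] at h1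
  have hne : ((p * p' : ℕ) : K) ≠ 0 := Nat.cast_ne_zero.mpr (by positivity)
  exact hne (by push_cast at h1 ⊢; linear_combination h1)

lemma aux_one_sub_X_pow_ne_zero (K : Type) [Field K] (n : ℕ) (hn : 0 < n) :
    (1 : K[X]) - X ^ n ≠ 0 := by
  intro h0
  have h1 : (1 : K[X]) = X ^ n := by linear_combination h0
  have h2 := congrArg natDegree h1
  simp [natDegree_X_pow] at h2
  omega

end Aux


open MvPolynomial

noncomputable section



/-- The rational function field `E = K(a,b,c,d)`, realized as the fraction field of the
polynomial ring in the four indeterminates `a, b, c, d`. -/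
abbrev E (K : Type) [Field K] := FractionRing (MvPolynomial (Fin 4) K)

/-- The transcendental generator `a` of `E = K(a,b,c,d)`. -/
def va (K : Type) [Field K] : E K := algebraMap (MvPolynomial (Fin 4) K) (E K) (X 0)
/-- The transcendental generator `b` of `E = K(a,b,c,d)`. -/
def vb (K : Type) [Field K] : E K := algebraMap (MvPolynomial (Fin 4) K) (E K) (X 1)
/-- The transcendental generator `c` of `E = K(a,b,c,d)`. -/
def vc (K : Type) [Field K] : E K := algebraMap (MvPolynomial (Fin 4) K) (E K) (X 2)
/-- The transcendental generator `d` of `E = K(a,b,c,d)`. -/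
def vd (K : Type) [Field K] : E K := algebraMap (MvPolynomial (Fin 4) K) (E K) (X 3)

/-- Non-commutation of `Γ_p^*` with the Frobenius-power substitution `Γ_{p̄'}^*` on `a²`:
for distinct odd primes `p ≠ p'`, in `E = K(a,b,c,d)`,
`2a^{2pp'}·(a^{p'}d^{p'}−b^{p'}c^{p'})^p/(a^{pp'}d^{pp'}−b^{pp'}c^{pp'})
  ≠ 2a^{2pp'}·((ad−bc)^p/(a^p d^p − b^p c^p))^{p'}`,
i.e. `Γ_{p̄'}^*(Γ_p^*(a²)) ≠ Γ_p^*(Γ_{p̄'}^*(a²))`. -/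
theorem stmt14 (K : Type) [Field K] [CharZero K] (p p' : ℕ)
    (hp : p.Prime) (hop : Odd p) (hp' : p'.Prime) (hop' : Odd p') (hne : p ≠ p')
    (a b c d : E K) (ha : a = va K) (hb : b = vb K) (hc : c = vc K) (hd : d = vd K) :
    2 * a ^ (2 * p * p') * (a ^ p' * d ^ p' - b ^ p' * c ^ p') ^ p
        / (a ^ (p * p') * d ^ (p * p') - b ^ (p * p') * c ^ (p * p'))
      ≠ 2 * a ^ (2 * p * p')
        * ((a * d - b * c) ^ p / (a ^ p * d ^ p - b ^ p * c ^ p)) ^ p' := by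
  intro h
  set F := algebraMap (MvPolynomial (Fin 4) K) (E K) with hF
  have Finj : Function.Injective F := IsFractionRing.injective _ _
  set φ : MvPolynomial (Fin 4) K →ₐ[K] Polynomial K := aeval ![1, Polynomial.X, 1, 1] with hφ
  -- the denominators are nonzero
  have hDgen : ∀ n : ℕ, 0 < n →
      a ^ n * d ^ n - b ^ n * c ^ n ≠ 0 := by
    intro n hn h0
    rw [ha, hb, hc, hd] at h0
    have hrw : va K ^ n * vd K ^ n - vb K ^ n * vc K ^ n
        = F ((X 0) ^ n * (X 3) ^ n - (X 1) ^ n * (X 2) ^ n) := by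
      simp [va, vb, vc, vd, map_sub, map_mul, map_pow, hF]
    rw [hrw] at h0
    have hz : ((X 0) ^ n * (X 3) ^ n - (X 1) ^ n * (X 2) ^ n : MvPolynomial (Fin 4) K) = 0 :=
      Finj (by simpa using h0)
    have hφz := congrArg φ hz
    simp only [map_sub, map_mul, map_pow, map_zero, hφ] at hφz
    simp at hφz
    exact aux_one_sub_X_pow_ne_zero K n hn (by linear_combination hφz)
  have hD1 : a ^ (p * p') * d ^ (p * p') - b ^ (p * p') * c ^ (p * p') ≠ 0 :=
    hDgen (p * p') (Nat.mul_pos hp.pos hp'.pos)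
  have hD2 : a ^ p * d ^ p - b ^ p * c ^ p ≠ 0 := hDgen p hp.pos
  have hva : a ≠ 0 := by
    rw [ha]
    simp only [va, ne_eq, map_eq_zero_iff F Finj]
    exact (map_ne_zero_iff _ Finj).mpr (MvPolynomial.X_ne_zero (R := K) 0)
  have hlead : 2 * a ^ (2 * p * p') ≠ 0 :=
    mul_ne_zero two_ne_zero (pow_ne_zero _ hva)
  -- cross-multiplied form of the hypothesis
  have key' : 2 * a ^ (2*p*p') * ((a ^ p' * d ^ p' - b ^ p' * c ^ p') ^ p
        * (a ^ p * d ^ p - b ^ p * c ^ p) ^ p')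
      = 2 * a ^ (2*p*p') * ((a * d - b * c) ^ (p * p')
        * (a ^ (p * p') * d ^ (p * p') - b ^ (p * p') * c ^ (p * p'))) := by
    field_simp at h
    rw [div_pow, mul_div_assoc', eq_div_iff (pow_ne_zero _ hD2), ← pow_mul] at h
    linear_combination 2 * a ^ (2*p*p') * h
  have key := mul_left_cancel₀ hlead key'
  rw [ha, hb, hc, hd] at key
  -- transfer to the polynomial ring
  have hPQ : ((X 0) ^ p' * (X 3) ^ p' - (X 1) ^ p' * (X 2) ^ p') ^ p
        * ((X 0) ^ p * (X 3) ^ p - (X 1) ^ p * (X 2) ^ p) ^ p'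
      = ((X 0) * (X 3) - (X 1) * (X 2)) ^ (p * p')
        * ((X 0) ^ (p*p') * (X 3) ^ (p*p') - (X 1) ^ (p*p') * (X 2) ^ (p*p')
          : MvPolynomial (Fin 4) K) := by
    apply Finj
    simpa [va, vb, vc, vd, map_sub, map_mul, map_pow, hF] using key
  -- specialize via φ and contradict the one-variable inequality
  have hφPQ := congrArg φ hPQ
  simp only [map_sub, map_mul, map_pow, hφ] at hφPQ
  simp at hφPQ
  exact aux_poly_ne K p p' hp.one_lt hp'.one_lt (by linear_combination hφPQ)
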